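/- Let α = 2√3 − 3 and γ = (3−√3)/2. For every ξ > 0 there exist δ > 0 and n₀ such that the following holds for all n ≥ n₀. Suppose G is an n-vertex graph and V₁ ∪ V₂ = V(G) is a partition such that (i) the total number of type-1 and type-2 four-vertex paths in G with respect to (V₁,V₂) is at most δn⁴, (ii) | |V₁| − γn | ≤ δn, and (iii) |G[V₂]| ≤ (α/2 + δ)·|V₂|². Then |G| ≤ (α/2 + ξ)·n². Moreover, if additionally |G| ≥ (α/2 − δ)·n², then either |G[V₁,V₂]| ≤ ξn² or |G[V₁]| + |G[V₂]| ≤ ξn². -/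

import Mathlib

set_option maxHeartbeats 1000000


open scoped Classical

noncomputable section

/-- The constant `α = 2√3 − 3`. -/
def alphaC : ℝ := 2 * Real.sqrt 3 - 3

/-- The constant `γ = (3 − √3)/2`. -/
def gammaC : ℝ := (3 - Real.sqrt 3) / 2

/-- `G` is a (simple) graph, given by its edge set of 2-element subsets of `Fin n`. -/
def IsGraph {n : ℕ} (G : Finset (Finset (Fin n))) : Prop :=
  ∀ e ∈ G, e.card = 2

/-- The number of 4-vertex paths `(a,b,c,d)` of type 1 with respect to `(V₁,V₂)`:
four distinct vertices with `{a,b}, {b,c}, {c,d}` edges, `a,b,c ∈ V₁` and `d ∈ V₂`. -/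
def type1Paths {n : ℕ} (G : Finset (Finset (Fin n))) (V₁ V₂ : Finset (Fin n)) : ℕ :=
  (Finset.univ.filter (fun p : Fin n × Fin n × Fin n × Fin n =>
    ({p.1, p.2.1, p.2.2.1, p.2.2.2} : Finset (Fin n)).card = 4 ∧
    ({p.1, p.2.1} : Finset (Fin n)) ∈ G ∧
    ({p.2.1, p.2.2.1} : Finset (Fin n)) ∈ G ∧
    ({p.2.2.1, p.2.2.2} : Finset (Fin n)) ∈ G ∧
    p.1 ∈ V₁ ∧ p.2.1 ∈ V₁ ∧ p.2.2.1 ∈ V₁ ∧ p.2.2.2 ∈ V₂)).card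

/-- The number of 4-vertex paths `(a,b,c,d)` of type 2 with respect to `(V₁,V₂)`:
four distinct vertices with `{a,b}, {b,c}, {c,d}` edges, `a,d ∈ V₁` and `b,c ∈ V₂`. -/
def type2Paths {n : ℕ} (G : Finset (Finset (Fin n))) (V₁ V₂ : Finset (Fin n)) : ℕ :=
  (Finset.univ.filter (fun p : Fin n × Fin n × Fin n × Fin n =>
    ({p.1, p.2.1, p.2.2.1, p.2.2.2} : Finset (Fin n)).card = 4 ∧
    ({p.1, p.2.1} : Finset (Fin n)) ∈ G ∧
    ({p.2.1, p.2.2.1} : Finset (Fin n)) ∈ G ∧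
    ({p.2.2.1, p.2.2.2} : Finset (Fin n)) ∈ G ∧
    p.1 ∈ V₁ ∧ p.2.2.2 ∈ V₁ ∧ p.2.1 ∈ V₂ ∧ p.2.2.1 ∈ V₂)).card


lemma contR0 (p q ω υ b c ε : ℝ) (hp : 0 < p) (hqp : q ≤ p)
    (h2 : b ≤ ω*q + 4*ε) (h3 : b ≤ υ*p + 4*ε)
    (h5 : c ≤ (q-υ)*q + 4*ε) (hq0 : 0 ≤ q) :
    p*(b+c) ≤ p*q^2 + ω*q*(p-q) + 8*p*ε := by
  rcases le_or_gt (υ*p) (ω*q) with hc | hc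
  · nlinarith [mul_nonneg (sub_nonneg.2 hqp) (sub_nonneg.2 hc)]
  · nlinarith [mul_le_mul_of_nonneg_left hc.le hq0]

lemma pqBound (s p q ε : ℝ) (hs : s^2 = 3) (hs1 : 1.7320 ≤ s) (hs2 : s ≤ 1.7321)
    (hq : p + q = 1) (hp1 : p - (3-s)/2 ≤ ε) (hp2 : -ε ≤ p - (3-s)/2)
    (hpl : 0.632 ≤ p) (hpu : p ≤ 0.636) (hε : 0 ≤ ε) :
    p*q ≤ (s-3/2) + 0.3*ε ∧ (s-3/2) - 0.3*ε ≤ p*q := by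
  have hq' : q = 1 - p := by linarith
  subst hq'
  have hid : p*(1-p) - (s-3/2) = -(p - (3-s)/2)*(p - (s-1)/2) := by
    linear_combination (-1/4) * hs
  have h1 : 0.26 ≤ p - (s-1)/2 := by linarith
  have h2 : p - (s-1)/2 ≤ 0.28 := by linarith
  constructor <;>
    nlinarith [mul_nonneg (show (0:ℝ) ≤ ε - (p - (3-s)/2) by linarith) (show (0:ℝ) ≤ p - (s-1)/2 by linarith),
      mul_nonneg (show (0:ℝ) ≤ (p - (3-s)/2) + ε by linarith) (show (0:ℝ) ≤ p - (s-1)/2 by linarith),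
      mul_nonneg (show (0:ℝ) ≤ ε - (p - (3-s)/2) by linarith) (show (0:ℝ) ≤ 0.28 - (p - (s-1)/2) by linarith),
      mul_nonneg (show (0:ℝ) ≤ (p - (3-s)/2) + ε by linarith) (show (0:ℝ) ≤ 0.28 - (p - (s-1)/2) by linarith)]

lemma yLem (s p q ε : ℝ) (hs : s^2 = 3) (hs1 : 1.7320 ≤ s) (hs2 : s ≤ 1.7321)
    (hq : p + q = 1) (hd : p - (3-s)/2 ≤ ε) (hε : 0 ≤ ε) :
    -(3*ε) ≤ q*s - p := by
  have hq' : q = 1 - p := by linarith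
  subst hq'
  have hid : (1-p)*s - p = -(p - (3-s)/2)*(s+1) + (s^2-3)/2 := by ring
  nlinarith [mul_nonneg (show (0:ℝ) ≤ ε - (p - (3-s)/2) by linarith) (show (0:ℝ) ≤ s+1 by linarith)]

lemma keyLem (p q ω : ℝ) (hω0 : 0 ≤ ω) (hωp : ω ≤ p) (ht : p - ω ≤ 1/5)
    (hpl : 0.632 ≤ p) (hpu : p ≤ 0.636) (hql : 0.364 ≤ q) (hqu : q ≤ 0.368) :
    p*(p-ω)^2 ≤ 2*(p-ω)*q*(p-q) := by
  have hA : 0.19 ≤ 2*q*(p-q) := by nlinarith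
  have hB : p*(p-ω) ≤ 0.13 := by nlinarith [sub_nonneg.2 hωp]
  nlinarith [mul_nonneg (sub_nonneg.2 hωp) (show (0:ℝ) ≤ 2*q*(p-q) - p*(p-ω) by linarith)]

lemma quadE (s q t ε : ℝ) (hs : s^2 = 3) (hs1 : 1.7320 ≤ s) (hs2 : s ≤ 1.7321)
    (hql : 0.364 ≤ q) (hqu : q ≤ 0.368) (hε : 0 ≤ ε) (hεs : ε ≤ 1/1000)
    (ht : 1/5 ≤ t) (hy : -(3*ε) ≤ q*s - t) :
    t^2/2 - t*q + (s-3/2)*q^2 ≤ 2*ε := by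
  have hfac : t^2/2 - t*q + (s-3/2)*q^2 = (t - q*(2-s))*(t - q*s)/2 := by
    linear_combination (q^2/2) * hs
  have hxl : 0.1 ≤ t - q*(2-s) := by nlinarith
  rcases le_or_gt t (q*s) with hc | hc
  · nlinarith [mul_nonneg (show (0:ℝ) ≤ t - q*(2-s) by linarith) (sub_nonneg.2 hc)]
  · have hxu : t - q*(2-s) ≤ 1 := by nlinarith
    have h3 : t - q*s ≤ 3*ε := by linarith
    nlinarith [mul_le_mul hxu h3 (by linarith : (0:ℝ) ≤ t - q*s) (by norm_num : (0:ℝ) ≤ 1)]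

lemma cont0 (s p q ω υ a b c ε : ℝ) (hs : s^2 = 3) (hs1 : 1.7320 ≤ s) (hs2 : s ≤ 1.7321)
    (hq : p + q = 1) (hp : |p - (3-s)/2| ≤ ε) (hε : 0 ≤ ε) (hεs : ε ≤ 1/1000)
    (hω0 : 0 ≤ ω) (hωp : ω ≤ p) (hυ0 : 0 ≤ υ) (hυq : υ ≤ q)
    (ha0 : 0 ≤ a) (hb0 : 0 ≤ b) (hc0 : 0 ≤ c)
    (h1 : a ≤ (p-ω)^2/2 + 4*ε) (h2 : b ≤ ω*q + 4*ε) (h3 : b ≤ υ*p + 4*ε)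
    (h4 : c ≤ (s-3/2)*q^2 + 4*ε) (h5 : c ≤ (q-υ)*q + 4*ε) :
    a+b+c ≤ (s-3/2) + 50*ε := by
  rw [abs_le] at hp
  have hpl : 0.632 ≤ p := by linarith
  have hpu : p ≤ 0.636 := by linarith
  have hql : 0.364 ≤ q := by linarith
  have hqu : q ≤ 0.368 := by linarith
  have hp0 : (0:ℝ) < p := by linarith
  have hq0 : (0:ℝ) ≤ q := by linarith
  have hpq := (pqBound s p q ε hs hs1 hs2 hq hp.2 hp.1 hpl hpu hε).1
  rcases le_or_gt (p - ω) (1/5) with ht | ht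
  · have hR := contR0 p q ω υ b c ε hp0 (by linarith) h2 h3 h5 hq0
    have key := keyLem p q ω hω0 hωp ht hpl hpu hql hqu
    have h1' := mul_le_mul_of_nonneg_left h1 hp0.le
    have e1 : p*(a+b+c) ≤ p*(p*q + 12*ε) := by linarith [h1', hR, key]
    have e2 : a+b+c ≤ p*q + 12*ε := (mul_le_mul_iff_of_pos_left hp0).mp e1
    linarith
  · have hy0 := yLem s p q ε hs hs1 hs2 hq hp.2 hε
    have hy : -(3*ε) ≤ q*s - (p - ω) := by linarith
    have key2 := quadE s q (p-ω) ε hs hs1 hs2 hql hqu hε hεs ht.le hy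
    linarith [h1, h2, h4, key2, hpq]
theorem cont1 (s p q ω υ a b c ε ξ : ℝ) (hs : s^2 = 3) (hs1 : 1.7320 ≤ s) (hs2 : s ≤ 1.7321)
    (hq : p + q = 1) (hp : |p - (3-s)/2| ≤ ε) (hε : 0 ≤ ε)
    (hξ1 : 0 < ξ) (hξ2 : ξ ≤ 1/100) (hεξ : ε ≤ ξ/10000)
    (hω0 : 0 ≤ ω) (hωp : ω ≤ p) (hυ0 : 0 ≤ υ) (hυq : υ ≤ q)
    (ha0 : 0 ≤ a) (hb0 : 0 ≤ b) (hc0 : 0 ≤ c)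
    (h1 : a ≤ (p-ω)^2/2 + 4*ε) (h2 : b ≤ ω*q + 4*ε) (h3 : b ≤ υ*p + 4*ε)
    (h4 : c ≤ (s-3/2)*q^2 + 4*ε) (h5 : c ≤ (q-υ)*q + 4*ε)
    (hS : (s-3/2) - 50*ε ≤ a+b+c) :
    b ≤ ξ ∨ a+c ≤ ξ := by
  by_contra hcon
  push_neg at hcon
  obtain ⟨hb, hac⟩ := hcon
  rw [abs_le] at hp
  have hεs : ε ≤ 1/1000000 := by linarith
  have hpl : 0.632 ≤ p := by linarith
  have hpu : p ≤ 0.636 := by linarith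
  have hql : 0.364 ≤ q := by linarith
  have hqu : q ≤ 0.368 := by linarith
  have hp0 : (0:ℝ) < p := by linarith
  have hq0 : (0:ℝ) ≤ q := by linarith
  have hpq := pqBound s p q ε hs hs1 hs2 hq hp.2 hp.1 hpl hpu hε
  have hy0 := yLem s p q ε hs hs1 hs2 hq hp.2 hε
  -- ω is not tiny since b > ξ
  have hω1 : ξ - 4*ε ≤ ω := by
    have h := mul_le_mul_of_nonneg_left (show q ≤ 1 by linarith) hω0
    linarith [h]
  -- branch X inequality
  have BX : a+b+c ≤ (p-ω)^2/2 - (p-ω)*q + p*q + (s-3/2)*q^2 + 12*ε := by linarith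
  have hfacX : (p-ω)^2/2 - (p-ω)*q + (s-3/2)*q^2
      = ((p-ω) - q*(2-s))*((p-ω) - q*s)/2 := by linear_combination (q^2/2) * hs
  have hX : -(125*ε) ≤ ((p-ω) - q*(2-s))*((p-ω) - q*s) := by
    linarith [BX, hS, hpq.2, hfacX]
  have ht15 : p - ω ≤ 0.15 := by
    by_contra hgt
    push_neg at hgt
    have hq2s : q*(2-s) ≤ 0.0987 := by
      calc q*(2-s) ≤ 0.368*0.268 := by
            apply mul_le_mul hqu (by linarith) (by linarith) (by norm_num)
        _ ≤ 0.0987 := by norm_num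
    have hxl : 0.05 ≤ (p-ω) - q*(2-s) := by linarith
    have hyy : ξ/2 ≤ q*s - (p-ω) := by linarith
    have hprod := mul_le_mul hxl hyy (by linarith) (by linarith)
    linarith [hprod, hX]
  -- now t is tiny
  have hc2 : 0.096 ≤ q*(p-q) := by
    calc (0.096:ℝ) ≤ 0.364*0.264 := by norm_num
      _ ≤ q*(p-q) := mul_le_mul hql (by linarith) (by norm_num) hq0
  have hpt : p*(p-ω) ≤ 0.0954 := by
    calc p*(p-ω) ≤ 0.636*0.15 := mul_le_mul hpu ht15 (by linarith) (by norm_num)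
      _ ≤ 0.0954 := by norm_num
  have hc1 : p*(p-ω)^2 ≤ 0.096*(p-ω) := by
    have h := mul_nonneg (sub_nonneg.2 hωp) (show (0:ℝ) ≤ 0.096 - p*(p-ω) by linarith)
    nlinarith [h]
  have hR := contR0 p q ω υ b c ε hp0 (by linarith) h2 h3 h5 hq0
  have h1' := mul_le_mul_of_nonneg_left h1 hp0.le
  have hS' := mul_le_mul_of_nonneg_left hS hp0.le
  have hstep3 : (p-ω) ≤ 1400*ε := by
    linarith [hR, h1', hS', mul_le_mul_of_nonneg_left hpq.1 hp0.le, hc1,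
      mul_nonneg (sub_nonneg.2 hωp) (show (0:ℝ) ≤ q*(p-q) - 0.096 by linarith),
      mul_le_mul_of_nonneg_right hpu hε]
  have ha5 : a ≤ 5*ε := by
    have ht0 : (0:ℝ) ≤ p - ω := sub_nonneg.2 hωp
    have hsq := mul_le_mul hstep3 hstep3 ht0 (by linarith)
    have hee := mul_le_mul_of_nonneg_left hεs hε
    linarith [hsq, hee, h1]
  have hqυ : (q-υ)*(p-q) ≤ 70*ε := by linarith [h3, h5, hS, hpq.2, ha5]
  have hqυ2 : q - υ ≤ 280*ε := by
    have h := mul_nonneg (sub_nonneg.2 hυq) (show (0:ℝ) ≤ (p-q) - 0.264 by linarith)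
    linarith [h, hqυ]
  have hc97 : c ≤ 110*ε := by
    have h := mul_nonneg (sub_nonneg.2 hυq) (show (0:ℝ) ≤ 0.368 - q by linarith)
    linarith [h, hqυ2, h5]
  linarith [ha5, hc97, hac]

lemma card_four {n : ℕ} {a b c d : Fin n} (hab : a≠b) (hac : a≠c) (had : a≠d)
    (hbc : b≠c) (hbd : b≠d) (hcd : c≠d) : ({a,b,c,d} : Finset (Fin n)).card = 4 := by
  rw [Finset.card_insert_of_notMem (by simp [hab, hac, had]),
    Finset.card_insert_of_notMem (by simp [hbc, hbd]), Finset.card_pair hcd]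

lemma eq_pair_of {n : ℕ} {e : Finset (Fin n)} (he : e.card = 2) {x y : Fin n}
    (hx : x ∈ e) (hy : y ∈ e) (hxy : x ≠ y) : e = {x, y} := by
  refine (Finset.eq_of_subset_of_card_le ?_ ?_).symm
  · intro z hz
    rcases Finset.mem_insert.1 hz with h | h
    · exact h ▸ hx
    · exact (Finset.mem_singleton.1 h) ▸ hy
  · rw [he, Finset.card_pair hxy]

lemma aux_count {α β : Type*} [DecidableEq α] [DecidableEq β]
    (T : Finset β) (P : Finset α) (F : α → Finset β) (K : ℕ)
    (hsub : ∀ p ∈ P, F p ⊆ T) (hK : ∀ p ∈ P, K ≤ (F p).card)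
    (hdisj : ∀ p ∈ P, ∀ q ∈ P, p ≠ q → Disjoint (F p) (F q)) :
    P.card * K ≤ T.card := by
  calc P.card * K = ∑ _p ∈ P, K := by rw [Finset.sum_const, smul_eq_mul]
    _ ≤ ∑ p ∈ P, (F p).card := Finset.sum_le_sum hK
    _ = (P.biUnion F).card := (Finset.card_biUnion hdisj).symm
    _ ≤ T.card := Finset.card_le_card (by
        intro x hx
        obtain ⟨p, hp, hxp⟩ := Finset.mem_biUnion.1 hx
        exact hsub p hp hxp)

lemma fiber_fst {n : ℕ} (P : Finset (Fin n × Fin n)) (k : ℕ)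
    (h : ∀ v : Fin n, (P.filter (fun z => z.1 = v)).card ≤ k) :
    P.card ≤ n * k := by
  have h0 : P.card = ∑ v ∈ (Finset.univ : Finset (Fin n)),
      (P.filter (fun z => z.1 = v)).card :=
    Finset.card_eq_sum_card_fiberwise (by intro x _; exact Finset.mem_univ _)
  rw [h0]
  calc ∑ v ∈ (Finset.univ : Finset (Fin n)), (P.filter (fun z => z.1 = v)).card
      ≤ ∑ _v ∈ (Finset.univ : Finset (Fin n)), k := Finset.sum_le_sum (fun v _ => h v)
    _ = n * k := by rw [Finset.sum_const, smul_eq_mul, Finset.card_univ, Fintype.card_fin]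

lemma fiber_snd {n : ℕ} (P : Finset (Fin n × Fin n)) (k : ℕ)
    (h : ∀ v : Fin n, (P.filter (fun z => z.2 = v)).card ≤ k) :
    P.card ≤ n * k := by
  have h0 : P.card = ∑ v ∈ (Finset.univ : Finset (Fin n)),
      (P.filter (fun z => z.2 = v)).card :=
    Finset.card_eq_sum_card_fiberwise (by intro x _; exact Finset.mem_univ _)
  rw [h0]
  calc ∑ v ∈ (Finset.univ : Finset (Fin n)), (P.filter (fun z => z.2 = v)).card
      ≤ ∑ _v ∈ (Finset.univ : Finset (Fin n)), k := Finset.sum_le_sum (fun v _ => h v)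
    _ = n * k := by rw [Finset.sum_const, smul_eq_mul, Finset.card_univ, Fintype.card_fin]

/-- neighbors of `v` inside `S`. -/
noncomputable def nbhd {n : ℕ} (G : Finset (Finset (Fin n))) (S : Finset (Fin n)) (v : Fin n) :
    Finset (Fin n) := S.filter (fun u => ({v, u} : Finset (Fin n)) ∈ G ∧ u ≠ v)

lemma nbhd_subset {n : ℕ} (G : Finset (Finset (Fin n))) (S : Finset (Fin n)) (v : Fin n) :
    nbhd G S v ⊆ S := Finset.filter_subset _ _

lemma mem_nbhd {n : ℕ} {G : Finset (Finset (Fin n))} {S : Finset (Fin n)} {v u : Fin n} :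
    u ∈ nbhd G S v ↔ u ∈ S ∧ ({v, u} : Finset (Fin n)) ∈ G ∧ u ≠ v := by
  simp [nbhd]

lemma edge_split {n : ℕ} (G : Finset (Finset (Fin n))) (hG : ∀ e ∈ G, e.card = 2)
    (V₁ V₂ : Finset (Fin n)) (hU : V₁ ∪ V₂ = Finset.univ) (hD : Disjoint V₁ V₂) :
    G.card = (G.filter (fun e => e ⊆ V₁)).card + (G.filter (fun e => (e ∩ V₁).card = 1)).card
      + (G.filter (fun e => e ⊆ V₂)).card := by
  have hsplit1 := Finset.card_filter_add_card_filter_not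
    (s := G) (p := fun e => (e ∩ V₁).card = 1)
  have hsplit2 := Finset.card_filter_add_card_filter_not
    (s := G.filter (fun e => ¬ (e ∩ V₁).card = 1)) (p := fun e => e ⊆ V₁)
  rw [Finset.filter_filter, Finset.filter_filter] at hsplit2
  have h2 : G.filter (fun e => ¬(e ∩ V₁).card = 1 ∧ e ⊆ V₁) = G.filter (fun e => e ⊆ V₁) := by
    apply Finset.filter_congr
    intro e heG
    constructor
    · rintro ⟨_, h⟩; exact h
    · intro h
      refine ⟨?_, h⟩
      rw [Finset.inter_eq_left.2 h, hG e heG]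
      norm_num
  have h3 : G.filter (fun e => ¬(e ∩ V₁).card = 1 ∧ ¬ e ⊆ V₁) = G.filter (fun e => e ⊆ V₂) := by
    apply Finset.filter_congr
    intro e heG
    have hcard := hG e heG
    constructor
    · rintro ⟨h1, h2⟩
      have hle : (e ∩ V₁).card ≤ 2 := by
        calc (e ∩ V₁).card ≤ e.card := Finset.card_le_card (Finset.inter_subset_left)
          _ = 2 := hcard
      have hne2 : (e ∩ V₁).card ≠ 2 := by
        intro hc
        apply h2
        have : e ∩ V₁ = e := Finset.eq_of_subset_of_card_le Finset.inter_subset_left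
          (by rw [hc, hcard])
        rw [← this]
        exact Finset.inter_subset_right
      have h0 : (e ∩ V₁).card = 0 := by omega
      have hemp : e ∩ V₁ = ∅ := Finset.card_eq_zero.1 h0
      intro x hx
      rcases Finset.mem_union.1 (hU ▸ Finset.mem_univ x) with hx1 | hx2
      · exact absurd (Finset.mem_inter.2 ⟨hx, hx1⟩) (by simp [hemp])
      · exact hx2
    · intro h
      have hemp : e ∩ V₁ = ∅ := by
        rw [Finset.eq_empty_iff_forall_notMem]
        intro x hx
        exact (Finset.disjoint_left.1 hD) (Finset.mem_inter.1 hx).2 (h (Finset.mem_inter.1 hx).1)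
      obtain ⟨x, hx⟩ : e.Nonempty := Finset.card_pos.1 (by omega)
      constructor
      · rw [hemp]; simp
      · intro hsub
        exact absurd (Finset.mem_inter.2 ⟨hx, hsub hx⟩) (by simp [hemp])
  have h2' := congrArg Finset.card h2
  have h3' := congrArg Finset.card h3
  omega

section CountMain

variable {n : ℕ} {G : Finset (Finset (Fin n))} {V₁ V₂ W B U : Finset (Fin n)} {k : ℕ}

/-- Edges inside V₁: bound via edges avoiding W, pairs (B,W), and low-degree pairs. -/
lemma E1bound (hG : ∀ e ∈ G, e.card = 2) (hWV : W ⊆ V₁)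
    (hBdeg : ∀ v ∈ V₁, v ∉ B → (nbhd G V₁ v).card ≤ k) :
    (G.filter (fun e => e ⊆ V₁)).card ≤ ((V₁ \ W).card).choose 2
      + (Finset.univ.filter (fun z : Fin n × Fin n =>
          ({z.1, z.2} : Finset (Fin n)) ∈ G ∧ z.1 ∈ B ∧ z.2 ∈ W)).card
      + n * k := by
  classical
  set PW : Finset (Fin n × Fin n) := Finset.univ.filter (fun z : Fin n × Fin n =>
      ({z.1, z.2} : Finset (Fin n)) ∈ G ∧ z.1 ∈ V₁ ∧ z.2 ∈ W) with hPW
  have hsplit := Finset.card_filter_add_card_filter_not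
    (s := G.filter (fun e => e ⊆ V₁)) (p := fun e => Disjoint e W)
  rw [Finset.filter_filter, Finset.filter_filter] at hsplit
  -- part 1 : edges avoiding W
  have hpart1 : (G.filter (fun e => e ⊆ V₁ ∧ Disjoint e W)).card ≤ ((V₁ \ W).card).choose 2 := by
    rw [← Finset.card_powersetCard]
    apply Finset.card_le_card
    intro e he
    rw [Finset.mem_filter] at he
    rw [Finset.mem_powersetCard]
    exact ⟨fun x hx => Finset.mem_sdiff.2 ⟨he.2.1 hx, Finset.disjoint_left.1 he.2.2 hx⟩,
      hG e he.1⟩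
  -- part 2 : edges meeting W inject into PW
  have hpart2 : (G.filter (fun e => e ⊆ V₁ ∧ ¬ Disjoint e W)).card ≤ PW.card := by
    apply Finset.card_le_card_of_surjOn (fun z => ({z.1, z.2} : Finset (Fin n)))
    intro e he
    simp only [Finset.coe_filter, Set.mem_setOf_eq] at he
    obtain ⟨heG, heV, hndisj⟩ := he
    obtain ⟨c, hcW, hce⟩ : ∃ c, c ∈ W ∧ c ∈ e := by
      rw [Finset.not_disjoint_iff] at hndisj
      obtain ⟨c, h1, h2⟩ := hndisj
      exact ⟨c, h2, h1⟩
    obtain ⟨x, y, hxy, hexy⟩ := Finset.card_eq_two.1 (hG e heG)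
    have hcxy : c = x ∨ c = y := by
      rw [hexy] at hce; simpa using hce
    rcases hcxy with rfl | rfl
    · refine ⟨(y, c), ?_, ?_⟩
      · simp only [hPW, Finset.coe_filter, Set.mem_setOf_eq, Finset.mem_univ, true_and]
        refine ⟨?_, heV (by rw [hexy]; simp), hcW⟩
        rw [show ({y, c} : Finset (Fin n)) = {c, y} from Finset.pair_comm y c, ← hexy]
        exact heG
      · show ({y, c} : Finset (Fin n)) = e
        rw [Finset.pair_comm y c]; exact hexy.symm
    · refine ⟨(x, c), ?_, ?_⟩
      · simp only [hPW, Finset.coe_filter, Set.mem_setOf_eq, Finset.mem_univ, true_and]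
        refine ⟨?_, heV (by rw [hexy]; simp), hcW⟩
        rw [← hexy]; exact heG
      · show ({x, c} : Finset (Fin n)) = e
        exact hexy.symm
  -- PW splits
  have hPWsplit := Finset.card_filter_add_card_filter_not
    (s := PW) (p := fun z => z.1 ∈ B)
  have hPWB : (PW.filter (fun z => z.1 ∈ B)).card ≤
      (Finset.univ.filter (fun z : Fin n × Fin n =>
        ({z.1, z.2} : Finset (Fin n)) ∈ G ∧ z.1 ∈ B ∧ z.2 ∈ W)).card := by
    apply Finset.card_le_card
    intro z hz
    simp only [hPW, Finset.mem_filter, Finset.mem_univ, true_and] at hz ⊢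
    exact ⟨hz.1.1, hz.2, hz.1.2.2⟩
  have hPWnB : (PW.filter (fun z => ¬ z.1 ∈ B)).card ≤ n * k := by
    apply fiber_fst
    intro v
    by_cases hv : v ∈ V₁ ∧ v ∉ B
    · apply le_trans (Finset.card_le_card_of_injOn Prod.snd ?_ ?_) (hBdeg v hv.1 hv.2)
      · intro z hz
        simp only [hPW, Finset.mem_coe, Finset.mem_filter, Finset.mem_univ, true_and] at hz
        obtain ⟨⟨⟨hzG, _, hzW⟩, hzB⟩, hz1⟩ := hz
        rw [Finset.mem_coe, mem_nbhd, ← hz1]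
        have hcard := hG _ hzG
        have hne : z.2 ≠ z.1 := by
          intro h; rw [← h] at hcard; simp at hcard
        exact ⟨hWV hzW, hzG, hne⟩
      · intro z hz z' hz' hzz
        simp only [Finset.mem_coe, Finset.mem_filter] at hz hz'
        exact Prod.ext (hz.2.trans hz'.2.symm) hzz
    · convert Nat.zero_le k
      rw [Finset.card_eq_zero, Finset.eq_empty_iff_forall_notMem]
      intro z hz
      simp only [hPW, Finset.mem_filter, Finset.mem_univ, true_and] at hz
      obtain ⟨⟨⟨_, hzV, _⟩, hzB⟩, hz1⟩ := hz
      rw [hz1] at hzV hzB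
      exact hv ⟨hzV, hzB⟩
  omega

end CountMain
section CountMain2

variable {n : ℕ} {G : Finset (Finset (Fin n))} {V₁ V₂ W B U : Finset (Fin n)} {k : ℕ}

lemma type1count (hG : ∀ e ∈ G, e.card = 2) (hD : Disjoint V₁ V₂)
    (hB : ∀ v ∈ B, v ∈ V₁ ∧ k+1 ≤ (nbhd G V₁ v).card)
    (hW : ∀ v ∈ W, v ∈ V₁ ∧ k ≤ (nbhd G V₂ v).card) :
    (Finset.univ.filter (fun z : Fin n × Fin n =>
        ({z.1, z.2} : Finset (Fin n)) ∈ G ∧ z.1 ∈ B ∧ z.2 ∈ W)).card * (k*k)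
      ≤ type1Paths G V₁ V₂ := by
  classical
  apply aux_count _ _
    (fun z : Fin n × Fin n => (((nbhd G V₁ z.1).erase z.2) ×ˢ (nbhd G V₂ z.2)).image
      (fun w : Fin n × Fin n => (w.1, z.1, z.2, w.2)))
  · -- hsub
    intro z hz x hx
    simp only [Finset.mem_filter, Finset.mem_univ, true_and] at hz
    obtain ⟨hzG, hzB, hzW⟩ := hz
    obtain ⟨hbV, _⟩ := hB _ hzB
    obtain ⟨hcV, _⟩ := hW _ hzW
    simp only [Finset.mem_image, Finset.mem_product, Finset.mem_erase] at hx
    obtain ⟨w, ⟨⟨hac, ha⟩, hd⟩, rfl⟩ := hx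
    rw [mem_nbhd] at ha hd
    obtain ⟨haV, haG, hab⟩ := ha
    obtain ⟨hdV, hdG, hdc⟩ := hd
    have hbc : z.1 ≠ z.2 := by
      intro h
      have := hG _ hzG
      rw [h] at this; simp at this
    have hdisj := Finset.disjoint_left.1 hD
    -- membership in the type-1 filter
    rw [Finset.mem_filter]
    refine ⟨Finset.mem_univ _, ?_, ?_, hzG, hdG, haV, hbV, hcV, hdV⟩
    · exact card_four hab hac (fun h => hdisj haV ((show w.1 = w.2 from h) ▸ hdV)) hbc
        (fun h => hdisj hbV ((show z.1 = w.2 from h) ▸ hdV))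
        (fun h => hdisj hcV ((show z.2 = w.2 from h) ▸ hdV))
    · rw [Finset.pair_comm]; exact haG
  · -- hK
    intro z hz
    simp only [Finset.mem_filter, Finset.mem_univ, true_and] at hz
    obtain ⟨hzG, hzB, hzW⟩ := hz
    rw [Finset.card_image_of_injective _ (fun w w' hww => by
      simpa [Prod.ext_iff] using hww)]
    rw [Finset.card_product]
    have h1 : k ≤ ((nbhd G V₁ z.1).erase z.2).card := by
      have := (hB _ hzB).2
      have h2 := Finset.pred_card_le_card_erase (s := nbhd G V₁ z.1) (a := z.2)
      omega
    exact Nat.mul_le_mul h1 (hW _ hzW).2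
  · -- hdisj
    intro p hp q hq hpq
    rw [Finset.disjoint_left]
    intro x hxp hxq
    simp only [Finset.mem_image] at hxp hxq
    obtain ⟨w, _, rfl⟩ := hxp
    obtain ⟨w', _, hx⟩ := hxq
    apply hpq
    have h1 : q.1 = p.1 := congrArg (fun t : _ × _ × _ × _ => t.2.1) hx
    have h2 : q.2 = p.2 := congrArg (fun t : _ × _ × _ × _ => t.2.2.1) hx
    exact Prod.ext h1.symm h2.symm

lemma type2count (hG : ∀ e ∈ G, e.card = 2) (hD : Disjoint V₁ V₂) (hk : 1 ≤ k)
    (hU : ∀ v ∈ U, v ∈ V₂ ∧ k ≤ (nbhd G V₁ v).card) :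
    (Finset.univ.filter (fun z : Fin n × Fin n =>
        ({z.1, z.2} : Finset (Fin n)) ∈ G ∧ z.1 ∈ U ∧ z.2 ∈ U ∧ z.1 < z.2)).card * ((k-1)*k)
      ≤ type2Paths G V₁ V₂ := by
  classical
  apply aux_count _ _
    (fun z : Fin n × Fin n => (((nbhd G V₁ z.1) ×ˢ (nbhd G V₁ z.2)).filter
        (fun w : Fin n × Fin n => ¬ w.1 = w.2)).image
      (fun w : Fin n × Fin n => (w.1, z.1, z.2, w.2)))
  · -- hsub
    intro z hz x hx
    simp only [Finset.mem_filter, Finset.mem_univ, true_and] at hz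
    obtain ⟨hzG, hzU1, hzU2, hzlt⟩ := hz
    obtain ⟨hbV, _⟩ := hU _ hzU1
    obtain ⟨hcV, _⟩ := hU _ hzU2
    simp only [Finset.mem_image, Finset.mem_filter, Finset.mem_product] at hx
    obtain ⟨w, ⟨⟨ha, hd⟩, had⟩, rfl⟩ := hx
    rw [mem_nbhd] at ha hd
    obtain ⟨haV, haG, hab⟩ := ha
    obtain ⟨hdV, hdG, hdc⟩ := hd
    have hdisj := Finset.disjoint_left.1 hD
    rw [Finset.mem_filter]
    refine ⟨Finset.mem_univ _, ?_, ?_, hzG, hdG, haV, hdV, hbV, hcV⟩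
    · refine card_four (fun h => hdisj haV ((show w.1 = z.1 from h) ▸ hbV))
        (fun h => hdisj haV ((show w.1 = z.2 from h) ▸ hcV))
        had (ne_of_lt hzlt)
        (fun h => hdisj hdV ((show z.1 = w.2 from h).symm ▸ hbV))
        (fun h => hdisj hdV ((show z.2 = w.2 from h).symm ▸ hcV))
    · rw [Finset.pair_comm]; exact haG
  · -- hK
    intro z hz
    simp only [Finset.mem_filter, Finset.mem_univ, true_and] at hz
    obtain ⟨hzG, hzU1, hzU2, _⟩ := hz
    rw [Finset.card_image_of_injective _ (fun w w' hww => by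
      simpa [Prod.ext_iff] using hww)]
    have hA := (hU _ hzU1).2
    have hBc := (hU _ hzU2).2
    set A := nbhd G V₁ z.1
    set Bb := nbhd G V₁ z.2
    have h2 : ((A ×ˢ Bb).filter (fun w : Fin n × Fin n => w.1 = w.2)).card
        + ((A ×ˢ Bb).filter (fun w : Fin n × Fin n => ¬ w.1 = w.2)).card
        = A.card * Bb.card := by
      rw [Finset.card_filter_add_card_filter_not, Finset.card_product]
    have h1 : ((A ×ˢ Bb).filter (fun w : Fin n × Fin n => w.1 = w.2)).card ≤ Bb.card := by
      apply Finset.card_le_card_of_injOn Prod.snd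
      · intro w hw
        simp only [Finset.mem_coe, Finset.mem_filter, Finset.mem_product] at hw
        exact hw.1.2
      · intro w hw w' hw' hss
        simp only [Finset.mem_coe, Finset.mem_filter] at hw hw'
        exact Prod.ext (by rw [hw.2, hw'.2, hss]) hss
    calc (k-1)*k ≤ (A.card - 1) * Bb.card := Nat.mul_le_mul (by omega) hBc
      _ = A.card * Bb.card - Bb.card := by rw [Nat.sub_one_mul]
      _ ≤ ((A ×ˢ Bb).filter (fun w : Fin n × Fin n => ¬ w.1 = w.2)).card := by omega
  · -- hdisj
    intro p hp q hq hpq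
    rw [Finset.disjoint_left]
    intro x hxp hxq
    simp only [Finset.mem_image] at hxp hxq
    obtain ⟨w, _, rfl⟩ := hxp
    obtain ⟨w', _, hx⟩ := hxq
    apply hpq
    have h1 : q.1 = p.1 := congrArg (fun t : _ × _ × _ × _ => t.2.1) hx
    have h2 : q.2 = p.2 := congrArg (fun t : _ × _ × _ × _ => t.2.2.1) hx
    exact Prod.ext h1.symm h2.symm

lemma E2bound (hG : ∀ e ∈ G, e.card = 2) (hUV : U ⊆ V₂) :
    (G.filter (fun e => e ⊆ V₂)).card ≤
      (Finset.univ.filter (fun z : Fin n × Fin n =>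
        ({z.1, z.2} : Finset (Fin n)) ∈ G ∧ z.1 ∈ U ∧ z.2 ∈ U ∧ z.1 < z.2)).card
      + (V₂ \ U).card * V₂.card := by
  classical
  have hsplit := Finset.card_filter_add_card_filter_not
    (s := G.filter (fun e => e ⊆ V₂)) (p := fun e => e ⊆ U)
  rw [Finset.filter_filter, Finset.filter_filter] at hsplit
  have hpart1 : (G.filter (fun e => e ⊆ V₂ ∧ e ⊆ U)).card ≤
      (Finset.univ.filter (fun z : Fin n × Fin n =>
        ({z.1, z.2} : Finset (Fin n)) ∈ G ∧ z.1 ∈ U ∧ z.2 ∈ U ∧ z.1 < z.2)).card := by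
    apply Finset.card_le_card_of_surjOn (fun z : Fin n × Fin n => ({z.1, z.2} : Finset (Fin n)))
    intro e he
    simp only [Finset.coe_filter, Set.mem_setOf_eq] at he
    obtain ⟨heG, _, heU⟩ := he
    obtain ⟨x, y, hxy, hexy⟩ := Finset.card_eq_two.1 (hG e heG)
    have hxU : x ∈ U := heU (by rw [hexy]; simp)
    have hyU : y ∈ U := heU (by rw [hexy]; simp)
    rcases lt_or_gt_of_ne hxy with hlt | hgt
    · refine ⟨(x, y), ?_, hexy.symm⟩
      simp only [Finset.coe_filter, Set.mem_setOf_eq, Finset.mem_univ, true_and]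
      exact ⟨hexy ▸ heG, hxU, hyU, hlt⟩
    · refine ⟨(y, x), ?_, ?_⟩
      · simp only [Finset.coe_filter, Set.mem_setOf_eq, Finset.mem_univ, true_and]
        refine ⟨?_, hyU, hxU, hgt⟩
        rw [Finset.pair_comm, ← hexy]; exact heG
      · show ({y, x} : Finset (Fin n)) = e
        rw [Finset.pair_comm, ← hexy]
  have hpart2 : (G.filter (fun e => e ⊆ V₂ ∧ ¬ e ⊆ U)).card ≤ (V₂ \ U).card * V₂.card := by
    have : (G.filter (fun e => e ⊆ V₂ ∧ ¬ e ⊆ U)).card ≤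
        (((V₂ \ U) ×ˢ V₂).filter (fun z : Fin n × Fin n =>
          ({z.1, z.2} : Finset (Fin n)) ∈ G)).card := by
      apply Finset.card_le_card_of_surjOn (fun z : Fin n × Fin n => ({z.1, z.2} : Finset (Fin n)))
      intro e he
      simp only [Finset.coe_filter, Set.mem_setOf_eq] at he
      obtain ⟨heG, heV, heU⟩ := he
      obtain ⟨c, hce, hcU⟩ := Finset.not_subset.1 heU
      obtain ⟨x, y, hxy, hexy⟩ := Finset.card_eq_two.1 (hG e heG)
      have hcxy : c = x ∨ c = y := by rw [hexy] at hce; simpa using hce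
      rcases hcxy with rfl | rfl
      · refine ⟨(c, y), ?_, hexy.symm⟩
        simp only [Finset.coe_filter, Set.mem_setOf_eq, Finset.mem_product, Finset.mem_sdiff]
        exact ⟨⟨⟨heV (by rw [hexy]; simp), hcU⟩, heV (by rw [hexy]; simp)⟩, hexy ▸ heG⟩
      · refine ⟨(c, x), ?_, ?_⟩
        · simp only [Finset.coe_filter, Set.mem_setOf_eq, Finset.mem_product, Finset.mem_sdiff]
          refine ⟨⟨⟨heV (by rw [hexy]; simp), hcU⟩, heV (by rw [hexy]; simp)⟩, ?_⟩
          rw [Finset.pair_comm, ← hexy]; exact heG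
        · show ({c, x} : Finset (Fin n)) = e
          rw [Finset.pair_comm, ← hexy]
    calc (G.filter (fun e => e ⊆ V₂ ∧ ¬ e ⊆ U)).card ≤ _ := this
      _ ≤ ((V₂ \ U) ×ˢ V₂).card := Finset.card_le_card (Finset.filter_subset _ _)
      _ = (V₂ \ U).card * V₂.card := Finset.card_product _ _
  omega

lemma Xbound (hG : ∀ e ∈ G, e.card = 2) (hUn : V₁ ∪ V₂ = Finset.univ) :
    (G.filter (fun e => (e ∩ V₁).card = 1)).card ≤
      ((V₁ ×ˢ V₂).filter (fun z : Fin n × Fin n =>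
        ({z.1, z.2} : Finset (Fin n)) ∈ G)).card := by
  classical
  apply Finset.card_le_card_of_surjOn (fun z : Fin n × Fin n => ({z.1, z.2} : Finset (Fin n)))
  intro e he
  simp only [Finset.coe_filter, Set.mem_setOf_eq] at he
  obtain ⟨heG, heI⟩ := he
  obtain ⟨a, ha⟩ := Finset.card_eq_one.1 heI
  have haV : a ∈ V₁ := by
    have : a ∈ e ∩ V₁ := by rw [ha]; simp
    exact (Finset.mem_inter.1 this).2
  have hae : a ∈ e := by
    have : a ∈ e ∩ V₁ := by rw [ha]; simp
    exact (Finset.mem_inter.1 this).1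
  obtain ⟨x, y, hxy, hexy⟩ := Finset.card_eq_two.1 (hG e heG)
  have haxy : a = x ∨ a = y := by rw [hexy] at hae; simpa using hae
  have key : ∀ b, b ∈ e → b ≠ a → b ∈ V₂ := by
    intro b hbe hba
    have hbV : b ∉ V₁ := by
      intro hbV
      have : ({b, a} : Finset (Fin n)) ⊆ e ∩ V₁ := by
        intro t ht
        rcases Finset.mem_insert.1 ht with rfl | ht
        · exact Finset.mem_inter.2 ⟨hbe, hbV⟩
        · rw [Finset.mem_singleton.1 ht]
          exact Finset.mem_inter.2 ⟨hae, haV⟩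
      have h2 := Finset.card_le_card this
      rw [ha, Finset.card_pair hba] at h2
      simp at h2
    rcases Finset.mem_union.1 (hUn ▸ Finset.mem_univ b) with h | h
    · exact absurd h hbV
    · exact h
  rcases haxy with rfl | rfl
  · refine ⟨(a, y), ?_, hexy.symm⟩
    simp only [Finset.coe_filter, Set.mem_setOf_eq, Finset.mem_product]
    exact ⟨⟨haV, key y (by rw [hexy]; simp) (fun h => hxy h.symm)⟩, hexy ▸ heG⟩
  · refine ⟨(a, x), ?_, ?_⟩
    · simp only [Finset.coe_filter, Set.mem_setOf_eq, Finset.mem_product]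
      refine ⟨⟨haV, key x (by rw [hexy]; simp) hxy⟩, ?_⟩
      rw [Finset.pair_comm, ← hexy]; exact heG
    · show ({a, x} : Finset (Fin n)) = e
      rw [Finset.pair_comm, ← hexy]

lemma PXsplit1 (hG : ∀ e ∈ G, e.card = 2)
    (hWdeg : ∀ v ∈ V₁, v ∉ W → (nbhd G V₂ v).card ≤ k) :
    ((V₁ ×ˢ V₂).filter (fun z : Fin n × Fin n =>
        ({z.1, z.2} : Finset (Fin n)) ∈ G)).card ≤ W.card * V₂.card + n * k := by
  classical
  set PX := (V₁ ×ˢ V₂).filter (fun z : Fin n × Fin n =>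
      ({z.1, z.2} : Finset (Fin n)) ∈ G) with hPX
  have hsplit := Finset.card_filter_add_card_filter_not
    (s := PX) (p := fun z => z.1 ∈ W)
  have h1 : (PX.filter (fun z => z.1 ∈ W)).card ≤ W.card * V₂.card := by
    calc (PX.filter (fun z => z.1 ∈ W)).card ≤ (W ×ˢ V₂).card := by
          apply Finset.card_le_card
          intro z hz
          simp only [hPX, Finset.mem_filter, Finset.mem_product] at hz ⊢
          exact ⟨hz.2, hz.1.1.2⟩
      _ = W.card * V₂.card := Finset.card_product _ _
  have h2 : (PX.filter (fun z => ¬ z.1 ∈ W)).card ≤ n * k := by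
    apply fiber_fst
    intro v
    by_cases hv : v ∈ V₁ ∧ v ∉ W
    · apply le_trans (Finset.card_le_card_of_injOn Prod.snd ?_ ?_) (hWdeg v hv.1 hv.2)
      · intro z hz
        simp only [hPX, Finset.mem_coe, Finset.mem_filter, Finset.mem_product] at hz
        obtain ⟨⟨⟨⟨hz1, hz2⟩, hzG⟩, _⟩, hzv⟩ := hz
        rw [Finset.mem_coe, mem_nbhd, ← hzv]
        have hcard := hG _ hzG
        have hne : z.2 ≠ z.1 := fun h => by rw [← h] at hcard; simp at hcard
        exact ⟨hz2, hzG, hne⟩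
      · intro z hz z' hz' hss
        simp only [Finset.mem_coe, Finset.mem_filter] at hz hz'
        exact Prod.ext (hz.2.trans hz'.2.symm) hss
    · convert Nat.zero_le k
      rw [Finset.card_eq_zero, Finset.eq_empty_iff_forall_notMem]
      intro z hz
      simp only [hPX, Finset.mem_filter, Finset.mem_product] at hz
      obtain ⟨⟨⟨⟨hz1, _⟩, _⟩, hzW⟩, hzv⟩ := hz
      rw [hzv] at hz1 hzW
      exact hv ⟨hz1, hzW⟩
  omega

lemma PXsplit2 (hG : ∀ e ∈ G, e.card = 2)
    (hUdeg : ∀ v ∈ V₂, v ∉ U → (nbhd G V₁ v).card ≤ k) :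
    ((V₁ ×ˢ V₂).filter (fun z : Fin n × Fin n =>
        ({z.1, z.2} : Finset (Fin n)) ∈ G)).card ≤ V₁.card * U.card + n * k := by
  classical
  set PX := (V₁ ×ˢ V₂).filter (fun z : Fin n × Fin n =>
      ({z.1, z.2} : Finset (Fin n)) ∈ G) with hPX
  have hsplit := Finset.card_filter_add_card_filter_not
    (s := PX) (p := fun z => z.2 ∈ U)
  have h1 : (PX.filter (fun z => z.2 ∈ U)).card ≤ V₁.card * U.card := by
    calc (PX.filter (fun z => z.2 ∈ U)).card ≤ (V₁ ×ˢ U).card := by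
          apply Finset.card_le_card
          intro z hz
          simp only [hPX, Finset.mem_filter, Finset.mem_product] at hz ⊢
          exact ⟨hz.1.1.1, hz.2⟩
      _ = V₁.card * U.card := Finset.card_product _ _
  have h2 : (PX.filter (fun z => ¬ z.2 ∈ U)).card ≤ n * k := by
    apply fiber_snd
    intro v
    by_cases hv : v ∈ V₂ ∧ v ∉ U
    · apply le_trans (Finset.card_le_card_of_injOn Prod.fst ?_ ?_) (hUdeg v hv.1 hv.2)
      · intro z hz
        simp only [hPX, Finset.mem_coe, Finset.mem_filter, Finset.mem_product] at hz
        obtain ⟨⟨⟨⟨hz1, hz2⟩, hzG⟩, _⟩, hzv⟩ := hz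
        rw [Finset.mem_coe, mem_nbhd]
        have hcard := hG _ hzG
        have hne : z.1 ≠ z.2 := fun h => by rw [← h] at hcard; simp at hcard
        refine ⟨hz1, ?_, ?_⟩
        · rw [← hzv, Finset.pair_comm]; exact hzG
        · intro h; exact hne (by rw [h, hzv])
      · intro z hz z' hz' hss
        simp only [Finset.mem_coe, Finset.mem_filter] at hz hz'
        exact Prod.ext hss (hz.2.trans hz'.2.symm)
    · convert Nat.zero_le k
      rw [Finset.card_eq_zero, Finset.eq_empty_iff_forall_notMem]
      intro z hz
      simp only [hPX, Finset.mem_filter, Finset.mem_product] at hz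
      obtain ⟨⟨⟨⟨_, hz2⟩, _⟩, hzU⟩, hzv⟩ := hz
      rw [hzv] at hz2 hzU
      exact hv ⟨hz2, hzU⟩
  omega


end CountMain2
lemma sqrt3_sq : (Real.sqrt 3)^2 = 3 := Real.sq_sqrt (by norm_num)
lemma sqrt3_lb : 1.7320 ≤ Real.sqrt 3 := by
  nlinarith [sqrt3_sq, Real.sqrt_nonneg 3]
lemma sqrt3_ub : Real.sqrt 3 ≤ 1.7321 := by
  nlinarith [sqrt3_sq, Real.sqrt_nonneg 3]

lemma div_trick {A X ε N : ℝ} (hN : 0 < N) (h : A ≤ X + ε*N^2) : A/N^2 ≤ X/N^2 + ε := by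
  have h2 : (X + ε*N^2)/N^2 = X/N^2 + ε := by field_simp
  rw [← h2]
  exact (div_le_div_iff_of_pos_right (by positivity)).2 h

/-- **Proposition (graphs with few type-1/type-2 paths).** For every `ξ > 0` there are
`δ > 0` and `n₀` such that for all `n ≥ n₀`: if `G` is an `n`-vertex graph with a vertex
partition `V₁ ∪ V₂` such that (i) the number of type-1 and type-2 paths is at most
`δn⁴`, (ii) `||V₁| − γn| ≤ δn`, and (iii) `|G[V₂]| ≤ (α/2 + δ)|V₂|²`, then
`|G| ≤ (α/2 + ξ)n²`; moreover, if also `|G| ≥ (α/2 − δ)n²`, then either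
`|G[V₁,V₂]| ≤ ξn²` or `|G[V₁]| + |G[V₂]| ≤ ξn²`. -/
theorem P4_free_structure (ξ : ℝ) (hξ : 0 < ξ) :
    ∃ δ : ℝ, 0 < δ ∧ ∃ n₀ : ℕ, ∀ n : ℕ, n₀ ≤ n →
      ∀ G : Finset (Finset (Fin n)), IsGraph G →
        ∀ V₁ V₂ : Finset (Fin n), V₁ ∪ V₂ = Finset.univ → Disjoint V₁ V₂ →
          ((type1Paths G V₁ V₂ + type2Paths G V₁ V₂ : ℕ) : ℝ) ≤ δ * (n : ℝ) ^ 4 →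
          |(V₁.card : ℝ) - gammaC * (n : ℝ)| ≤ δ * (n : ℝ) →
          ((G.filter (fun e => e ⊆ V₂)).card : ℝ) ≤ (alphaC / 2 + δ) * (V₂.card : ℝ) ^ 2 →
          (G.card : ℝ) ≤ (alphaC / 2 + ξ) * (n : ℝ) ^ 2 ∧
          ((alphaC / 2 - δ) * (n : ℝ) ^ 2 ≤ (G.card : ℝ) →
            ((G.filter (fun e => (e ∩ V₁).card = 1)).card : ℝ) ≤ ξ * (n : ℝ) ^ 2 ∨
            ((G.filter (fun e => e ⊆ V₁)).card : ℝ)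
                + ((G.filter (fun e => e ⊆ V₂)).card : ℝ) ≤ ξ * (n : ℝ) ^ 2) := by
  classical
  set s := Real.sqrt 3 with hsdef
  have hs : s^2 = 3 := sqrt3_sq
  have hs1 : 1.7320 ≤ s := sqrt3_lb
  have hs2 : s ≤ 1.7321 := sqrt3_ub
  set ξ' := min ξ (1/100) with hξ'def
  have hξ'pos : 0 < ξ' := lt_min hξ (by norm_num)
  have hξ'le : ξ' ≤ 1/100 := min_le_right _ _
  have hξ'ξ : ξ' ≤ ξ := min_le_left _ _
  set ε := ξ'/10000 with hεdef
  have hεpos : 0 < ε := by positivity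
  have hεsmall : ε ≤ 1/1000000 := by rw [hεdef]; linarith
  refine ⟨ε^3, by positivity, ⌈(4:ℝ)/ε⌉₊, ?_⟩
  intro n hn G hG V₁ V₂ hUn hD hpaths hV1 hE2hyp
  set N := (n:ℝ) with hNdef
  have hεN : 4 ≤ ε * N := by
    have h1 : (4:ℝ)/ε ≤ N := by
      rw [hNdef]
      exact_mod_cast (Nat.ceil_le.1 hn)
    calc (4:ℝ) = ε * (4/ε) := by field_simp
      _ ≤ ε * N := by apply mul_le_mul_of_nonneg_left h1 hεpos.le
  have hN0 : 0 < N := by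
    rcases le_or_gt N 0 with h | h
    · exfalso
      have h2 := mul_nonpos_of_nonneg_of_nonpos hεpos.le h
      linarith only [hεN, h2]
    · exact h
  have hε3 : ε^3 ≤ ε := by
    have h := mul_nonneg (mul_nonneg hεpos.le
      (show (0:ℝ) ≤ 1-ε by linarith only [hεsmall])) (show (0:ℝ) ≤ 1+ε by linarith only [hεpos])
    nlinarith only [h]
  have hN2 : (0:ℝ) < N^2 := by positivity
  -- the degree threshold
  set k := ⌈ε * N⌉₊ with hkdef
  have hk1 : ε * N ≤ (k:ℝ) := Nat.le_ceil _
  have hk2 : (k:ℝ) ≤ ε * N + 1 := le_of_lt (Nat.ceil_lt_add_one (by positivity))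
  have hk4 : (4:ℝ) ≤ (k:ℝ) := le_trans hεN hk1
  have hk4' : 4 ≤ k := by exact_mod_cast hk4
  -- special vertex sets
  set W := V₁.filter (fun v => k ≤ (nbhd G V₂ v).card) with hWdef
  set B := V₁.filter (fun v => k+1 ≤ (nbhd G V₁ v).card) with hBdef
  set U := V₂.filter (fun v => k ≤ (nbhd G V₁ v).card) with hUdef
  have hWV : W ⊆ V₁ := Finset.filter_subset _ _
  have hUV : U ⊆ V₂ := Finset.filter_subset _ _
  have hBdeg : ∀ v ∈ V₁, v ∉ B → (nbhd G V₁ v).card ≤ k := by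
    intro v hv hvB
    by_contra hcon
    exact hvB (Finset.mem_filter.2 ⟨hv, by omega⟩)
  have hWdeg : ∀ v ∈ V₁, v ∉ W → (nbhd G V₂ v).card ≤ k := by
    intro v hv hvW
    by_contra hcon
    exact hvW (Finset.mem_filter.2 ⟨hv, by omega⟩)
  have hUdeg : ∀ v ∈ V₂, v ∉ U → (nbhd G V₁ v).card ≤ k := by
    intro v hv hvU
    by_contra hcon
    exact hvU (Finset.mem_filter.2 ⟨hv, by omega⟩)
  have hBmem : ∀ v ∈ B, v ∈ V₁ ∧ k+1 ≤ (nbhd G V₁ v).card := fun v hv => Finset.mem_filter.1 hv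
  have hWmem : ∀ v ∈ W, v ∈ V₁ ∧ k ≤ (nbhd G V₂ v).card := fun v hv => Finset.mem_filter.1 hv
  have hUmem : ∀ v ∈ U, v ∈ V₂ ∧ k ≤ (nbhd G V₁ v).card := fun v hv => Finset.mem_filter.1 hv
  -- counting lemmas
  have hE1 := E1bound hG hWV hBdeg
  have hT1 := type1count hG hD hBmem hWmem
  have hXle := Xbound hG hUn
  have hX1 := PXsplit1 hG hWdeg
  have hX2 := PXsplit2 hG hUdeg
  have hE2 := E2bound (U := U) hG hUV
  have hT2 := type2count hG hD (by omega) hUmem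
  have hsplitcard := edge_split G hG V₁ V₂ hUn hD
  -- real abbreviations
  set E1 := ((G.filter (fun e => e ⊆ V₁)).card : ℝ) with hE1def
  set E2r := ((G.filter (fun e => e ⊆ V₂)).card : ℝ) with hE2def
  set X := ((G.filter (fun e => (e ∩ V₁).card = 1)).card : ℝ) with hXdef
  set m := (V₁.card : ℝ) with hmdef
  set v2 := (V₂.card : ℝ) with hv2def
  set w := (W.card : ℝ) with hwdef
  set u := (U.card : ℝ) with hudef
  have hmv2 : m + v2 = N := by
    have h1 : V₁.card + V₂.card = n := by
      rw [← Finset.card_union_of_disjoint hD, hUn, Finset.card_univ, Fintype.card_fin]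
    rw [hmdef, hv2def, hNdef]
    exact_mod_cast congrArg (Nat.cast : ℕ → ℝ) h1
  have hwm : w ≤ m := by
    rw [hwdef, hmdef]; exact_mod_cast Finset.card_le_card hWV
  have huv2 : u ≤ v2 := by
    rw [hudef, hv2def]; exact_mod_cast Finset.card_le_card hUV
  have hw0 : 0 ≤ w := by rw [hwdef]; exact Nat.cast_nonneg _
  have hu0 : 0 ≤ u := by rw [hudef]; exact Nat.cast_nonneg _
  have hm0 : 0 ≤ m := by rw [hmdef]; exact Nat.cast_nonneg _
  have hv20 : 0 ≤ v2 := by rw [hv2def]; exact Nat.cast_nonneg _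
  have hv2N : v2 ≤ N := by
    rw [hv2def, hNdef]
    exact_mod_cast le_trans (Finset.card_le_univ V₂) (le_of_eq (by simp))
  have hmN : m ≤ N := by
    rw [hmdef, hNdef]
    exact_mod_cast le_trans (Finset.card_le_univ V₁) (le_of_eq (by simp))
  -- N and k relations
  have hkN : (k:ℝ) * N ≤ 2*ε*N^2 := by
    have ha := mul_le_mul_of_nonneg_right hk2 hN0.le
    have hb := mul_le_mul_of_nonneg_right hεN hN0.le
    have hcc := mul_nonneg (mul_nonneg hεpos.le hN0.le) hN0.le
    nlinarith only [ha, hb, hcc]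
  -- paths bound, real
  have hδ : (ε:ℝ)^3 * N^4 = (ε*N^2) * ((ε*N)*(ε*N)) := by ring
  have hT1r : ((Finset.univ.filter (fun z : Fin n × Fin n =>
      ({z.1, z.2} : Finset (Fin n)) ∈ G ∧ z.1 ∈ B ∧ z.2 ∈ W)).card : ℝ) ≤ ε * N^2 := by
    set P1 := (Finset.univ.filter (fun z : Fin n × Fin n =>
      ({z.1, z.2} : Finset (Fin n)) ∈ G ∧ z.1 ∈ B ∧ z.2 ∈ W)).card with hP1def
    have hc : (P1 : ℝ) * ((k:ℝ)*(k:ℝ)) ≤ ε^3 * N^4 := by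
      have := hT1
      have hcast : (P1:ℝ) * ((k:ℝ)*(k:ℝ)) ≤ ((type1Paths G V₁ V₂ : ℕ):ℝ) := by
        exact_mod_cast this
      apply le_trans hcast
      calc ((type1Paths G V₁ V₂ : ℕ):ℝ) ≤ ((type1Paths G V₁ V₂ + type2Paths G V₁ V₂ : ℕ):ℝ) := by
            exact_mod_cast Nat.le_add_right _ _
        _ ≤ ε^3 * N^4 := hpaths
    have h2 : (P1:ℝ) * ((ε*N)*(ε*N)) ≤ (ε*N^2) * ((ε*N)*(ε*N)) := by
      calc (P1:ℝ) * ((ε*N)*(ε*N)) ≤ (P1:ℝ) * ((k:ℝ)*(k:ℝ)) := by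
            apply mul_le_mul_of_nonneg_left
              (mul_le_mul hk1 hk1 (by positivity) (by positivity)) (Nat.cast_nonneg P1)
        _ ≤ ε^3 * N^4 := hc
        _ = (ε*N^2) * ((ε*N)*(ε*N)) := by ring
    exact le_of_mul_le_mul_right h2 (by positivity)
  have hT2r : ((Finset.univ.filter (fun z : Fin n × Fin n =>
      ({z.1, z.2} : Finset (Fin n)) ∈ G ∧ z.1 ∈ U ∧ z.2 ∈ U ∧ z.1 < z.2)).card : ℝ)
        ≤ 2 * ε * N^2 := by
    set Q1 := (Finset.univ.filter (fun z : Fin n × Fin n =>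
      ({z.1, z.2} : Finset (Fin n)) ∈ G ∧ z.1 ∈ U ∧ z.2 ∈ U ∧ z.1 < z.2)).card with hQ1def
    have hc : (Q1 : ℝ) * (((k-1:ℕ):ℝ)*(k:ℝ)) ≤ ε^3 * N^4 := by
      have hcast : (Q1:ℝ) * (((k-1:ℕ):ℝ)*(k:ℝ)) ≤ ((type2Paths G V₁ V₂ : ℕ):ℝ) := by
        exact_mod_cast hT2
      apply le_trans hcast
      calc ((type2Paths G V₁ V₂ : ℕ):ℝ) ≤ ((type1Paths G V₁ V₂ + type2Paths G V₁ V₂ : ℕ):ℝ) := by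
            exact_mod_cast Nat.le_add_left _ _
        _ ≤ ε^3 * N^4 := hpaths
    have hkm1 : (ε*N)/2 ≤ ((k-1:ℕ):ℝ) := by
      have : ((k-1:ℕ):ℝ) = (k:ℝ) - 1 := by
        have : 1 ≤ k := by omega
        push_cast [Nat.cast_sub this]
        ring
      rw [this]
      linarith only [hk1, hεN]
    have h2 : (Q1:ℝ) * (((ε*N)/2)*(ε*N)) ≤ (2*ε*N^2) * (((ε*N)/2)*(ε*N)) := by
      calc (Q1:ℝ) * (((ε*N)/2)*(ε*N)) ≤ (Q1:ℝ) * (((k-1:ℕ):ℝ)*(k:ℝ)) := by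
            apply mul_le_mul_of_nonneg_left
              (mul_le_mul hkm1 hk1 (by positivity) (by positivity)) (Nat.cast_nonneg Q1)
        _ ≤ ε^3 * N^4 := hc
        _ ≤ (2*ε*N^2) * (((ε*N)/2)*(ε*N)) := le_of_eq (by ring)
    exact le_of_mul_le_mul_right h2 (by positivity)
  -- real versions of the counting bounds
  have hVWcast : (((V₁ \ W).card : ℕ):ℝ) = m - w := by
    rw [Finset.card_sdiff_of_subset hWV]
    push_cast [Nat.cast_sub (Finset.card_le_card hWV)]
    ring
  have hchoose : ((((V₁ \ W).card).choose 2 : ℕ):ℝ) ≤ (m - w)^2/2 := by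
    rw [Nat.choose_two_right]
    have hstep : (((V₁ \ W).card * ((V₁ \ W).card - 1) : ℕ):ℝ) ≤ (m-w)*(m-w) := by
      push_cast
      rw [← hVWcast]
      exact mul_le_mul_of_nonneg_left
        (Nat.cast_le.2 (Nat.sub_le _ _)) (Nat.cast_nonneg _)
    calc ((((V₁ \ W).card * ((V₁ \ W).card - 1)) / 2 : ℕ):ℝ)
        ≤ (((V₁ \ W).card * ((V₁ \ W).card - 1) : ℕ):ℝ)/2 := Nat.cast_div_le
      _ ≤ ((m-w) * (m-w))/2 := by linarith only [hstep]
      _ = (m-w)^2/2 := by ring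
  have hnkr : ((n * k : ℕ):ℝ) ≤ 2*ε*N^2 := by
    push_cast
    calc N * (k:ℝ) = (k:ℝ) * N := by ring
      _ ≤ 2*ε*N^2 := hkN
  have h1r : E1 ≤ (m-w)^2/2 + 4*ε*N^2 := by
    have hc := hE1
    have hcr : E1 ≤ ((((V₁ \ W).card).choose 2 : ℕ):ℝ)
        + ((Finset.univ.filter (fun z : Fin n × Fin n =>
            ({z.1, z.2} : Finset (Fin n)) ∈ G ∧ z.1 ∈ B ∧ z.2 ∈ W)).card : ℝ)
        + ((n * k : ℕ):ℝ) := by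
      rw [hE1def]
      push_cast
      exact_mod_cast hc
    linarith only [hcr, hchoose, hT1r, hnkr]
  have h2r : X ≤ w * v2 + 4*ε*N^2 := by
    have hc : X ≤ w * v2 + ((n*k : ℕ):ℝ) := by
      rw [hXdef, hwdef, hv2def]
      exact_mod_cast le_trans hXle hX1
    linarith only [hc, hnkr]
  have h3r : X ≤ m * u + 4*ε*N^2 := by
    have hc : X ≤ m * u + ((n*k : ℕ):ℝ) := by
      rw [hXdef, hmdef, hudef]
      exact_mod_cast le_trans hXle hX2
    linarith only [hc, hnkr]
  have hv2u : (((V₂ \ U).card : ℕ):ℝ) = v2 - u := by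
    rw [Finset.card_sdiff_of_subset hUV]
    push_cast [Nat.cast_sub (Finset.card_le_card hUV)]
    ring
  have h5r : E2r ≤ (v2 - u) * v2 + 4*ε*N^2 := by
    have hc : E2r ≤ ((Finset.univ.filter (fun z : Fin n × Fin n =>
        ({z.1, z.2} : Finset (Fin n)) ∈ G ∧ z.1 ∈ U ∧ z.2 ∈ U ∧ z.1 < z.2)).card : ℝ)
        + (((V₂ \ U).card * V₂.card : ℕ):ℝ) := by
      rw [hE2def]
      exact_mod_cast hE2
    push_cast at hc
    rw [hv2u] at hc
    linarith only [hc, hT2r]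
  have h4r : E2r ≤ (s-3/2) * v2^2 + 4*ε*N^2 := by
    have hc : E2r ≤ (alphaC/2 + ε^3) * v2^2 := hE2hyp
    have hα : alphaC/2 = s - 3/2 := by unfold alphaC; rw [← hsdef]; ring
    rw [hα] at hc
    have hv2sq : v2^2 ≤ N^2 := pow_le_pow_left₀ hv20 hv2N 2
    have h2 : ε^3 * v2^2 ≤ ε * N^2 :=
      mul_le_mul hε3 hv2sq (sq_nonneg v2) hεpos.le
    have h3 : (0:ℝ) ≤ ε * N^2 := mul_nonneg hεpos.le (sq_nonneg N)
    linarith only [hc, h2, h3]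
  -- normalize
  have hdivsum : E1/N^2 + X/N^2 + E2r/N^2 = (E1 + X + E2r)/N^2 := by ring
  have hid1 : (m/N - w/N)^2/2 = ((m-w)^2/2)/N^2 := by
    rw [div_sub_div_same, div_pow]
    ring
  have hid2 : (w/N)*(v2/N) = (w*v2)/N^2 := by
    rw [div_mul_div_comm]
    ring_nf
  have hid3 : (u/N)*(m/N) = (m*u)/N^2 := by
    rw [div_mul_div_comm]
    ring_nf
  have hid4 : (s-3/2)*(v2/N)^2 = ((s-3/2)*v2^2)/N^2 := by
    rw [div_pow]
    ring
  have hid5 : (v2/N - u/N)*(v2/N) = ((v2-u)*v2)/N^2 := by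
    rw [div_sub_div_same, div_mul_div_comm]
    ring
  have hq1 : m/N + v2/N = 1 := by
    rw [← add_div, hmv2, div_self hN0.ne']
  have hpabs : |m/N - (3-s)/2| ≤ ε := by
    have hγ : gammaC = (3-s)/2 := by unfold gammaC; rw [← hsdef]
    have h0 : m/N - (3-s)/2 = (m - gammaC*N)/N := by
      rw [hγ]
      field_simp
    rw [h0, abs_div, abs_of_pos hN0, div_le_iff₀ hN0]
    calc |m - gammaC*N| ≤ ε^3*N := hV1
      _ ≤ ε*N := mul_le_mul_of_nonneg_right hε3 hN0.le
  have hh1 : E1/N^2 ≤ (m/N - w/N)^2/2 + 4*ε := by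
    rw [hid1]; exact div_trick hN0 h1r
  have hh2 : X/N^2 ≤ (w/N)*(v2/N) + 4*ε := by
    rw [hid2]; exact div_trick hN0 h2r
  have hh3 : X/N^2 ≤ (u/N)*(m/N) + 4*ε := by
    rw [hid3]; exact div_trick hN0 h3r
  have hh4 : E2r/N^2 ≤ (s-3/2)*(v2/N)^2 + 4*ε := by
    rw [hid4]; exact div_trick hN0 h4r
  have hh5 : E2r/N^2 ≤ (v2/N - u/N)*(v2/N) + 4*ε := by
    rw [hid5]; exact div_trick hN0 h5r
  have hω0 : 0 ≤ w/N := div_nonneg hw0 hN0.le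
  have hωp : w/N ≤ m/N := div_le_div_of_nonneg_right hwm hN0.le
  have hυ0 : 0 ≤ u/N := div_nonneg hu0 hN0.le
  have hυq : u/N ≤ v2/N := div_le_div_of_nonneg_right huv2 hN0.le
  have ha0 : 0 ≤ E1/N^2 := by
    apply div_nonneg _ hN2.le
    rw [hE1def]; exact Nat.cast_nonneg _
  have hb0 : 0 ≤ X/N^2 := by
    apply div_nonneg _ hN2.le
    rw [hXdef]; exact Nat.cast_nonneg _
  have hc0 : 0 ≤ E2r/N^2 := by
    apply div_nonneg _ hN2.le
    rw [hE2def]; exact Nat.cast_nonneg _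
  have hα : alphaC/2 = s - 3/2 := by unfold alphaC; rw [← hsdef]; ring
  have hmain := cont0 s (m/N) (v2/N) (w/N) (u/N) (E1/N^2) (X/N^2) (E2r/N^2) ε
    hs hs1 hs2 hq1 hpabs hεpos.le (by linarith only [hεsmall]) hω0 hωp hυ0 hυq ha0 hb0 hc0
    hh1 hh2 hh3 hh4 hh5
  have hsum : (G.card:ℝ) = E1 + X + E2r := by
    rw [hE1def, hXdef, hE2def]
    exact_mod_cast hsplitcard
  have h50 : 50*ε ≤ ξ := by
    rw [hεdef]
    linarith only [hξ'ξ, hξ'pos]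
  have hcon1 : (G.card:ℝ) ≤ (alphaC/2 + ξ)*N^2 := by
    rw [hdivsum, div_le_iff₀ hN2] at hmain
    rw [hsum, hα]
    have h2 := mul_le_mul_of_nonneg_right
      (show (s-3/2) + 50*ε ≤ (s-3/2) + ξ by linarith only [h50]) hN2.le
    linarith only [hmain, h2]
  refine ⟨hcon1, ?_⟩
  intro hlow
  have hS : (s-3/2) - 50*ε ≤ E1/N^2 + X/N^2 + E2r/N^2 := by
    rw [hdivsum, le_div_iff₀ hN2]
    calc ((s-3/2) - 50*ε)*N^2 ≤ (alphaC/2 - ε^3)*N^2 := by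
          rw [hα]
          exact mul_le_mul_of_nonneg_right
            (by linarith only [hε3, hεpos]) hN2.le
      _ ≤ (G.card:ℝ) := hlow
      _ = E1 + X + E2r := hsum
  have hfin := cont1 s (m/N) (v2/N) (w/N) (u/N) (E1/N^2) (X/N^2) (E2r/N^2) ε ξ'
    hs hs1 hs2 hq1 hpabs hεpos.le hξ'pos hξ'le (le_of_eq hεdef) hω0 hωp hυ0 hυq
    ha0 hb0 hc0 hh1 hh2 hh3 hh4 hh5 hS
  rcases hfin with h | h
  · left
    rw [div_le_iff₀ hN2] at h
    calc X ≤ ξ' * N^2 := h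
      _ ≤ ξ * N^2 := mul_le_mul_of_nonneg_right hξ'ξ hN2.le
  · right
    have h2 : (E1 + E2r)/N^2 ≤ ξ' := by
      have : (E1 + E2r)/N^2 = E1/N^2 + E2r/N^2 := by ring
      rw [this]
      exact h
    rw [div_le_iff₀ hN2] at h2
    calc E1 + E2r ≤ ξ' * N^2 := h2
      _ ≤ ξ * N^2 := mul_le_mul_of_nonneg_right hξ'ξ hN2.le
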